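/- arXiv:1703.06075 — 3 statements merged into one kernel-verified Lean document; each statement's English description precedes it below -/
import Mathlib

section
/- Let m, n, q be positive odd integers. Then the series Σ_{k=1}^{∞} 1 / ( Π_{j=0}^{m−1} L_{nk+njq} · Π_{j=m+1}^{2m} L_{nk+njq} ) converges, and its sum equals (1 / L_{mnq}) · Σ_{k=1}^{q} 1 / ( Π_{j=0}^{2m−1} L_{nk+njq} ). -/
open Filter Topology

/-- The Lucas numbers: `L 0 = 2`, `L 1 = 1`, `L (n+2) = L (n+1) + L n`. -/
def lucas : ℕ → ℕ
  | 0 => 2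
  | 1 => 1
  | n + 2 => lucas (n + 1) + lucas n

lemma lucas_pos : ∀ k, 0 < lucas k
  | 0 => by decide
  | 1 => by decide
  | n + 2 => by rw [lucas]; exact Nat.add_pos_left (lucas_pos (n+1)) _

lemma le_lucas : ∀ k, k ≤ lucas k
  | 0 => by decide
  | 1 => by decide
  | n + 2 => by
      rw [lucas]
      have := le_lucas (n+1)
      have := lucas_pos n
      omega

lemma lucasZ_eq : ∀ k, (lucas k : ℤ) = 2 * Nat.fib (k+1) - Nat.fib k
  | 0 => by decide
  | 1 => by decide
  | n + 2 => by
      rw [lucas]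
      have h1 := lucasZ_eq (n+1)
      have h2 := lucasZ_eq n
      have f1 : (Nat.fib (n+2) : ℤ) = Nat.fib n + Nat.fib (n+1) := by
        rw [Nat.fib_add_two]; push_cast; ring
      have f2 : (Nat.fib (n+3) : ℤ) = Nat.fib (n+1) + Nat.fib (n+2) := by
        rw [show n+3 = (n+1)+2 by ring, Nat.fib_add_two]; push_cast; ring
      push_cast
      rw [f2]
      push_cast at h1 h2
      linarith [f1]

lemma lucasZ_add : ∀ (b a : ℕ), (lucas (a + 1 + b) : ℤ)
    = lucas (a+1) * Nat.fib (b+1) + lucas a * Nat.fib b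
  | 0, a => by simp
  | b + 1, a => by
      have := lucasZ_add b (a+1)
      have hl : (lucas (a+2) : ℤ) = lucas (a+1) + lucas a := by
        rw [lucas]; push_cast; ring
      have hf : (Nat.fib (b+2) : ℤ) = Nat.fib b + Nat.fib (b+1) := by
        rw [Nat.fib_add_two]; push_cast; ring
      calc (lucas (a + 1 + (b+1)) : ℤ) = lucas ((a+1) + 1 + b) := by ring_nf
        _ = lucas (a+2) * Nat.fib (b+1) + lucas (a+1) * Nat.fib b := this
        _ = lucas (a+1) * Nat.fib (b+2) + lucas a * Nat.fib (b+1) := by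
            rw [hl, hf]; ring

lemma cassini : ∀ k, (Nat.fib (k+1) : ℤ)^2 - Nat.fib (k+2) * Nat.fib k = (-1)^k
  | 0 => by decide
  | n + 1 => by
      have ih := cassini n
      have hf : (Nat.fib (n+3) : ℤ) = Nat.fib (n+1) + Nat.fib (n+2) := by
        rw [show n+3 = (n+1)+2 by ring, Nat.fib_add_two]; push_cast; ring
      have hf2 : (Nat.fib (n+2) : ℤ) = Nat.fib n + Nat.fib (n+1) := by
        rw [Nat.fib_add_two]; push_cast; ring
      calc (Nat.fib (n+2) : ℤ)^2 - Nat.fib (n+3) * Nat.fib (n+1)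
          = -((Nat.fib (n+1):ℤ)^2 - Nat.fib (n+2) * Nat.fib n) := by
            rw [hf]; nlinarith [hf2]
        _ = (-1)^(n+1) := by rw [ih]; ring

lemma fibZ_two_mul (k : ℕ) : (Nat.fib (2*k) : ℤ) = Nat.fib k * lucas k := by
  have h := Nat.fib_two_mul k
  have hle : Nat.fib k ≤ 2 * Nat.fib (k+1) := by
    have := Nat.fib_le_fib_succ (n := k); omega
  have : (Nat.fib (2*k) : ℤ) = Nat.fib k * (2 * Nat.fib (k+1) - Nat.fib k) := by
    rw [h]; push_cast [Nat.cast_sub hle]; ring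
  rw [this, lucasZ_eq]

lemma fibZ_two_mul_sub (s : ℕ) :
    (Nat.fib (4*s+1) : ℤ) = Nat.fib (2*s) * lucas (2*s+1) + 1 := by
  rcases s with _ | s
  · decide
  · have h1 : (Nat.fib (4*(s+1)+1) : ℤ) = Nat.fib (2*(s+1)+1)^2 + Nat.fib (2*(s+1))^2 := by
      have := Nat.fib_two_mul_add_one (2*(s+1))
      rw [show 4*(s+1)+1 = 2*(2*(s+1))+1 by ring, this]; push_cast; ring
    have hc := cassini (2*s+1)
    have hL := lucasZ_eq (2*s+3)
    have hL' : (lucas (2*(s+1)+1) : ℤ) = 2 * Nat.fib (2*s+4) - Nat.fib (2*s+3) := by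
      rw [show 2*(s+1)+1 = 2*s+3 by ring, hL]
    have hf4 : (Nat.fib (2*s+4) : ℤ) = Nat.fib (2*s+2) + Nat.fib (2*s+3) := by
      rw [show 2*s+4 = (2*s+2)+2 by ring, Nat.fib_add_two]; push_cast; ring
    have hf3 : (Nat.fib (2*s+3) : ℤ) = Nat.fib (2*s+1) + Nat.fib (2*s+2) := by
      rw [show 2*s+3 = (2*s+1)+2 by ring, Nat.fib_add_two]; push_cast; ring
    have hpow : ((-1:ℤ))^(2*s+1) = -1 := by
      rw [pow_succ, pow_mul]; norm_num
    rw [hpow] at hc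
    rw [h1, hL']
    rw [show 2*(s+1)+1 = 2*s+3 by ring, show 2*(s+1) = 2*s+2 by ring]
    nlinarith [hf4, hf3, hc]

lemma lucas_key {t : ℕ} (ht : Odd t) (a : ℕ) :
    (lucas (a + 2*t) : ℤ) = lucas (a + t) * lucas t + lucas a := by
  obtain ⟨s, rfl⟩ := ht
  have h1 : (lucas (a + 2*(2*s+1)) : ℤ)
      = lucas (a+1) * Nat.fib (4*s+2) + lucas a * Nat.fib (4*s+1) := by
    rw [show a + 2*(2*s+1) = a + 1 + (4*s+1) by ring, lucasZ_add]

  have h2 : (lucas (a + (2*s+1)) : ℤ)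
      = lucas (a+1) * Nat.fib (2*s+1) + lucas a * Nat.fib (2*s) := by
    rw [show a + (2*s+1) = a + 1 + (2*s) by ring, lucasZ_add]

  have h3 : (Nat.fib (4*s+2) : ℤ) = Nat.fib (2*s+1) * lucas (2*s+1) := by
    rw [show 4*s+2 = 2*(2*s+1) by ring, fibZ_two_mul]
  have h4 := fibZ_two_mul_sub s
  rw [h1, h2, h3, h4]; ring

lemma lucas_one_le (j : ℕ) : (1:ℝ) ≤ (lucas j : ℝ) := by
  exact_mod_cast lucas_pos j

lemma step_key (m n q : ℕ) (hm' : 0 < m) (hodd : Odd (m*n*q)) (k : ℕ) :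
    (1 : ℝ) / ((∏ j ∈ Finset.range m, (lucas (n * k + n * j * q) : ℝ)) *
          ∏ j ∈ Finset.Icc (m + 1) (2 * m), (lucas (n * k + n * j * q) : ℝ))
    = ((1 / ∏ j ∈ Finset.range (2*m), (lucas (n * k + n * j * q) : ℝ)) -
       (1 / ∏ j ∈ Finset.range (2*m), (lucas (n * (k+q) + n * j * q) : ℝ)))
      / (lucas (m*n*q) : ℝ) := by
  set f : ℕ → ℝ := fun j => (lucas (n * k + n * j * q) : ℝ) with hf
  have hf1 : ∀ j, (1:ℝ) ≤ f j := fun j => lucas_one_le _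
  have hfpos : ∀ j, 0 < f j := fun j => lt_of_lt_of_le one_pos (hf1 j)
  set Full : ℝ := ∏ j ∈ Finset.range (2*m+1), f j with hFull
  set P : ℝ := ∏ j ∈ Finset.range (2*m), f j with hPdef
  set Dm : ℝ := ∏ j ∈ Finset.range m, f j with hDm
  set DI : ℝ := ∏ j ∈ Finset.Icc (m+1) (2*m), f j with hDI
  have hPpos : 0 < P := Finset.prod_pos (fun j _ => hfpos j)
  have hFullpos : 0 < Full := Finset.prod_pos (fun j _ => hfpos j)
  have hDmpos : 0 < Dm := Finset.prod_pos (fun j _ => hfpos j)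
  have hDIpos : 0 < DI := Finset.prod_pos (fun j _ => hfpos j)
  have hLpos : (0:ℝ) < (lucas (m*n*q) : ℝ) := by exact_mod_cast lucas_pos _
  -- second product equals shifted product
  have hshift : (∏ j ∈ Finset.range (2*m), (lucas (n * (k+q) + n * j * q) : ℝ))
      = ∏ j ∈ Finset.range (2*m), f (j+1) := by
    apply Finset.prod_congr rfl
    intro j _
    have : n * (k+q) + n * j * q = n * k + n * (j+1) * q := by ring
    rw [this]
  have h1 : Full = P * f (2*m) := Finset.prod_range_succ f (2*m)
  have h2 : Full = (∏ j ∈ Finset.range (2*m), f (j+1)) * f 0 :=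
    Finset.prod_range_succ' f (2*m)
  have h3 : Full = (Dm * f m) * DI := by
    rw [hFull, Finset.range_eq_Ico,
      ← Finset.prod_Ico_consecutive f (Nat.zero_le (m+1)) (by omega : m+1 ≤ 2*m+1)]
    rw [← Finset.range_eq_Ico, Finset.Ico_add_one_right_eq_Icc, Finset.prod_range_succ]
  have hnum : f (2*m) = f m * (lucas (m*n*q) : ℝ) + f 0 := by
    have hk := lucas_key hodd (n*k)
    have e1 : n * k + n * (2*m) * q = n*k + 2*(m*n*q) := by ring
    have e2 : n * k + n * m * q = n*k + m*n*q := by ring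
    have e0 : n * k + n * 0 * q = n*k := by ring
    simp only [hf, e1, e2, e0]
    exact_mod_cast hk
  set P' : ℝ := ∏ j ∈ Finset.range (2*m), f (j+1) with hP'
  have hP'pos : 0 < P' := Finset.prod_pos (fun j _ => hfpos (j+1))
  have e1 : (1:ℝ)/P = f (2*m)/Full := by
    rw [h1, mul_comm P (f (2*m)), div_mul_eq_div_div, div_self (ne_of_gt (hfpos (2*m)))]
  have e2 : (1:ℝ)/P' = f 0/Full := by
    rw [h2, mul_comm P' (f 0), div_mul_eq_div_div, div_self (ne_of_gt (hfpos 0))]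
  have e3 : (1:ℝ)/(Dm * DI) = f m/Full := by
    rw [h3, div_eq_div_iff (ne_of_gt (mul_pos hDmpos hDIpos))
      (ne_of_gt (mul_pos (mul_pos hDmpos (hfpos m)) hDIpos))]
    ring
  rw [hshift, e1, e2, e3, div_sub_div_same, hnum]
  rw [div_div, div_eq_div_iff (ne_of_gt hFullpos) (by positivity)]
  ring

/-- Theorem (`m`, `n`, `q` odd):
`Σ_{k=1}^{∞} 1/(Π_{j=0}^{m−1} L_{nk+njq} · Π_{j=m+1}^{2m} L_{nk+njq})
  = (1/L_{mnq}) Σ_{k=1}^{q} 1/(Π_{j=0}^{2m−1} L_{nk+njq})`. -/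
theorem stmt_11 (m n q : ℕ) (hm : Odd m) (hn : Odd n) (hq : Odd q)
    (hm' : 0 < m) (hn' : 0 < n) (hq' : 0 < q) :
    Tendsto (fun N => ∑ k ∈ Finset.Icc 1 N,
        (1 : ℝ) / ((∏ j ∈ Finset.range m, (lucas (n * k + n * j * q) : ℝ)) *
          ∏ j ∈ Finset.Icc (m + 1) (2 * m), (lucas (n * k + n * j * q) : ℝ)))
      atTop
      (𝓝 ((1 / (lucas (m * n * q) : ℝ)) *
        ∑ k ∈ Finset.Icc 1 q,
          (1 : ℝ) / ∏ j ∈ Finset.range (2 * m), (lucas (n * k + n * j * q) : ℝ))) := by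
  have hodd : Odd (m * n * q) := (hm.mul hn).mul hq
  set L : ℝ := (lucas (m*n*q) : ℝ) with hL
  have hLpos : 0 < L := by rw [hL]; exact_mod_cast lucas_pos _
  set B : ℕ → ℝ := fun k =>
    (1 : ℝ) / ∏ j ∈ Finset.range (2 * m), (lucas (n * k + n * j * q) : ℝ) with hB
  -- the partial-sum formula for N ≥ q
  have hsum : ∀ N : ℕ, q ≤ N →
      (∑ k ∈ Finset.Icc 1 N,
        (1 : ℝ) / ((∏ j ∈ Finset.range m, (lucas (n * k + n * j * q) : ℝ)) *
          ∏ j ∈ Finset.Icc (m + 1) (2 * m), (lucas (n * k + n * j * q) : ℝ)))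
      = (1/L) * ((∑ k ∈ Finset.Ioc 0 q, B k) - ∑ k ∈ Finset.Ioc N (N+q), B k) := by
    intro N hN
    have hterm : ∀ k ∈ Finset.Icc 1 N,
        (1 : ℝ) / ((∏ j ∈ Finset.range m, (lucas (n * k + n * j * q) : ℝ)) *
          ∏ j ∈ Finset.Icc (m + 1) (2 * m), (lucas (n * k + n * j * q) : ℝ))
        = (B k - B (k+q)) / L := by
      intro k _
      have := step_key m n q hm' hodd k
      rw [this, hB]
    rw [Finset.sum_congr rfl hterm]
    have hre : (∑ k ∈ Finset.Icc 1 N, B (k+q)) = ∑ k ∈ Finset.Icc (1+q) (N+q), B k := by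
      rw [← Finset.map_add_right_Icc, Finset.sum_map]
      rfl
    have i1 : Finset.Icc 1 N = Finset.Ioc 0 N := rfl
    have i2 : Finset.Icc (1+q) (N+q) = Finset.Ioc q (N+q) := by
      rw [add_comm 1 q]; exact Finset.Icc_add_one_left_eq_Ioc q (N+q)
    have t1 := Finset.sum_Ioc_consecutive B (Nat.zero_le q) hN
    have t2 := Finset.sum_Ioc_consecutive B hN (Nat.le_add_right N q)
    calc ∑ k ∈ Finset.Icc 1 N, (B k - B (k+q)) / L
        = ((∑ k ∈ Finset.Icc 1 N, B k) - ∑ k ∈ Finset.Icc 1 N, B (k+q)) / L := by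
          rw [← Finset.sum_div, Finset.sum_sub_distrib]
      _ = ((∑ k ∈ Finset.Ioc 0 N, B k) - ∑ k ∈ Finset.Ioc q (N+q), B k) / L := by
          rw [hre, i1, i2]
      _ = (1/L) * ((∑ k ∈ Finset.Ioc 0 q, B k) - ∑ k ∈ Finset.Ioc N (N+q), B k) := by
          rw [← t1, ← t2]; ring
  -- tail tends to zero
  have htail : Tendsto (fun N => ∑ k ∈ Finset.Ioc N (N+q), B k) atTop (𝓝 0) := by
    have hBnn : ∀ k, 0 ≤ B k := by
      intro k
      rw [hB]
      positivity
    have hbound : ∀ N : ℕ, (∑ k ∈ Finset.Ioc N (N+q), B k) ≤ (q:ℝ) * (1/(N+1)) := by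
      intro N
      have h1 : ∀ k ∈ Finset.Ioc N (N+q), B k ≤ 1/(N+1 : ℝ) := by
        intro k hk
        rw [Finset.mem_Ioc] at hk
        have hfk : ((N:ℝ)+1) ≤ ∏ j ∈ Finset.range (2 * m), (lucas (n * k + n * j * q) : ℝ) := by
          have hnat : N + 1 ≤ ∏ j ∈ Finset.range (2 * m), lucas (n * k + n * j * q) := by
            have h0 : lucas (n * k + n * 0 * q) ≤
                ∏ j ∈ Finset.range (2 * m), lucas (n * k + n * j * q) :=
              Finset.single_le_prod' (f := fun j => lucas (n * k + n * j * q)) (fun j _ => lucas_pos _)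
                (Finset.mem_range.mpr (Nat.mul_pos Nat.zero_lt_two hm'))
            have hk1 : N + 1 ≤ lucas (n * k + n * 0 * q) := by
              have h2 : n * k ≤ lucas (n * k + n * 0 * q) := by
                simpa using le_lucas (n*k)
              nlinarith [hk.1, hn']
            omega
          exact_mod_cast hnat
        rw [hB]
        apply one_div_le_one_div_of_le (by positivity) hfk
      calc (∑ k ∈ Finset.Ioc N (N+q), B k) ≤ (Finset.Ioc N (N+q)).card • (1/(N+1:ℝ)) :=
            Finset.sum_le_card_nsmul _ _ _ h1
        _ = (q:ℝ) * (1/(N+1)) := by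
            rw [Nat.card_Ioc, nsmul_eq_mul]
            congr 1
            push_cast [Nat.add_sub_cancel_left]
            ring
    have hlim : Tendsto (fun N : ℕ => (q:ℝ) * (1/(N+1))) atTop (𝓝 0) := by
      have := tendsto_one_div_add_atTop_nhds_zero_nat.const_mul (q:ℝ)
      simpa using this
    exact squeeze_zero (fun N => Finset.sum_nonneg fun k _ => hBnn k) hbound hlim
  -- conclude
  have hgoal : Tendsto (fun N => (1/L) * ((∑ k ∈ Finset.Ioc 0 q, B k)
      - ∑ k ∈ Finset.Ioc N (N+q), B k)) atTop
      (𝓝 ((1/L) * ((∑ k ∈ Finset.Ioc 0 q, B k) - 0))) :=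
    (tendsto_const_nhds.sub htail).const_mul _
  rw [sub_zero] at hgoal
  have hS : (∑ k ∈ Finset.Ioc 0 q, B k)
      = ∑ k ∈ Finset.Icc 1 q,
          (1 : ℝ) / ∏ j ∈ Finset.range (2 * m), (lucas (n * k + n * j * q) : ℝ) := rfl
  rw [hS] at hgoal
  apply hgoal.congr'
  filter_upwards [eventually_ge_atTop q] with N hN
  rw [hsum N hN, hS]
end

section
/- Let m, n, q be positive integers such that mnq is even. Then the series Σ_{k=1}^{∞} L_{nk+mnq} / ( Π_{j=0}^{2m} F_{nk+njq} ) converges, and its sum equals (1 / F_{mnq}) · Σ_{k=1}^{q} 1 / ( Π_{j=0}^{2m−1} F_{nk+njq} ). -/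
open Filter Topology

lemma lucas_fib : ∀ s, lucas (s + 1) = Nat.fib s + Nat.fib (s + 2)
  | 0 => by simp [lucas]
  | 1 => by simp [lucas]; rfl
  | s + 2 => by
    show lucas (s + 2) + lucas (s + 1) = _
    rw [lucas_fib (s + 1), lucas_fib s]
    have h1 : Nat.fib (s + 3) = Nat.fib (s + 1) + Nat.fib (s + 2) := Nat.fib_add_two
    have h2 : Nat.fib (s + 2) = Nat.fib s + Nat.fib (s + 1) := Nat.fib_add_two
    have h3 : Nat.fib (s + 4) = Nat.fib (s + 2) + Nat.fib (s + 3) := Nat.fib_add_two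
    simp only [show s + 1 + 2 = s + 3 from rfl, show s + 2 + 2 = s + 4 from rfl]
    omega

lemma docagne : ∀ b, ∀ a : ℕ,
    (Even b → Nat.fib (b + 1) * Nat.fib (a + b) = Nat.fib b * Nat.fib (a + b + 1) + Nat.fib a) ∧
    (Odd b → Nat.fib b * Nat.fib (a + b + 1) = Nat.fib (b + 1) * Nat.fib (a + b) + Nat.fib a)
  | 0, a => by simp
  | b + 1, a => by
    obtain ⟨hE, hO⟩ := docagne b a
    have f1 : Nat.fib (b + 2) = Nat.fib b + Nat.fib (b + 1) := Nat.fib_add_two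
    have f2 : Nat.fib (a + b + 2) = Nat.fib (a + b) + Nat.fib (a + b + 1) := Nat.fib_add_two
    constructor
    · intro h
      have hb : Odd b := by
        rcases Nat.even_or_odd b with h' | h'
        · exact absurd h' (Nat.even_add_one.mp h)
        · exact h'
      have := hO hb
      simp only [show b + 1 + 1 = b + 2 from rfl, show a + b + 1 + 1 = a + b + 2 from rfl,
        show a + (b + 1) = a + b + 1 from by omega] at *
      nlinarith [this]
    · intro h
      have hb : Even b := by
        rcases Nat.even_or_odd b with h' | h'
        · exact h'
        · rw [Nat.odd_iff] at h h'; omega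
      have := hE hb
      simp only [show b + 1 + 1 = b + 2 from rfl, show a + b + 1 + 1 = a + b + 2 from rfl,
        show a + (b + 1) = a + b + 1 from by omega] at *
      nlinarith [this]

lemma key_fib (t a : ℕ) (ht : Even t) :
    Nat.fib (a + 2 * t) = Nat.fib t * lucas (a + t) + Nat.fib a := by
  rcases Nat.eq_zero_or_pos t with rfl | htpos
  · simp
  obtain ⟨t', rfl⟩ : ∃ t', t = t' + 1 := ⟨t - 1, by omega⟩
  have ht' : Odd t' := by
    rw [Nat.even_add_one] at ht
    rwa [Nat.odd_iff, ← Nat.not_even_iff]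
  have hO := (docagne t' a).2 ht'
  have hadd : Nat.fib (t' + (a + (t' + 1)) + 1)
      = Nat.fib t' * Nat.fib (a + (t' + 1)) + Nat.fib (t' + 1) * Nat.fib (a + (t' + 1) + 1) :=
    Nat.fib_add t' (a + (t' + 1))
  have hidx : a + 2 * (t' + 1) = t' + (a + (t' + 1)) + 1 := by ring
  rw [hidx, hadd, show a + (t' + 1) = (a + t') + 1 from by ring, lucas_fib (a + t')]
  simp only [show a + t' + 1 + 1 = a + t' + 2 from rfl] at *
  nlinarith [hO]

lemma term_eq (m n q k : ℕ) (hm : 0 < m) (hn : 0 < n) (hq : 0 < q) (hk : 0 < k)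
    (heven : Even (m * n * q)) :
    (lucas (n * k + m * n * q) : ℝ) /
        ∏ j ∈ Finset.range (2 * m + 1), (Nat.fib (n * k + n * j * q) : ℝ)
    = (1 / (Nat.fib (m * n * q) : ℝ)) *
      ((1 / ∏ j ∈ Finset.range (2 * m), (Nat.fib (n * k + n * j * q) : ℝ))
       - (1 / ∏ j ∈ Finset.range (2 * m), (Nat.fib (n * (k + q) + n * j * q) : ℝ))) := by
  have hpos : ∀ j : ℕ, (0:ℝ) < (Nat.fib (n * k + n * j * q) : ℝ) := fun j => by
    exact_mod_cast Nat.fib_pos.mpr (by positivity)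
  have hpos' : ∀ j : ℕ, (0:ℝ) < (Nat.fib (n * (k + q) + n * j * q) : ℝ) := fun j => by
    exact_mod_cast Nat.fib_pos.mpr (by positivity)
  set Q : ℝ := ∏ j ∈ Finset.range (2 * m), (Nat.fib (n * k + n * j * q) : ℝ) with hQ
  set Q' : ℝ := ∏ j ∈ Finset.range (2 * m), (Nat.fib (n * (k + q) + n * j * q) : ℝ) with hQ'
  set P : ℝ := ∏ j ∈ Finset.range (2 * m + 1), (Nat.fib (n * k + n * j * q) : ℝ) with hP
  have hQ0 : 0 < Q := Finset.prod_pos fun j _ => hpos j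
  have hQ'0 : 0 < Q' := Finset.prod_pos fun j _ => hpos' j
  have hP0 : 0 < P := Finset.prod_pos fun j _ => hpos j
  have hA0 : (0:ℝ) < (Nat.fib (n * k) : ℝ) := by
    exact_mod_cast Nat.fib_pos.mpr (by positivity)
  have hD0 : (0:ℝ) < (Nat.fib (m * n * q) : ℝ) := by
    exact_mod_cast Nat.fib_pos.mpr (by positivity)
  have hP1 : P = Q * (Nat.fib (n * k + 2 * (m * n * q)) : ℝ) := by
    rw [hP, Finset.prod_range_succ, ← hQ, show n * k + n * (2 * m) * q = n * k + 2 * (m * n * q) from by ring]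
  have hP2 : P = Q' * (Nat.fib (n * k) : ℝ) := by
    rw [hP, Finset.prod_range_succ', show n * k + n * 0 * q = n * k from by ring]
    congr 1
    exact Finset.prod_congr rfl fun j _ => by
      rw [show n * k + n * (j + 1) * q = n * (k + q) + n * j * q from by ring]
  have hkey : (Nat.fib (n * k + 2 * (m * n * q)) : ℝ)
      = (Nat.fib (m * n * q) : ℝ) * (lucas (n * k + m * n * q) : ℝ) + (Nat.fib (n * k) : ℝ) := by
    exact_mod_cast congrArg (Nat.cast (R := ℝ)) (key_fib (m * n * q) (n * k) heven)
  have hB0 : (0:ℝ) < (Nat.fib (n * k + 2 * (m * n * q)) : ℝ) := by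
    exact_mod_cast Nat.fib_pos.mpr (by positivity)
  field_simp
  linear_combination (-Q') * hP1 + Q * hP2 - (Q * Q') * hkey

lemma le_fib_succ : ∀ k : ℕ, k ≤ Nat.fib (k + 1)
  | 0 => by simp
  | 1 => by simp
  | k + 2 => by
    have h1 := le_fib_succ (k + 1)
    have h2 : 1 ≤ Nat.fib (k + 1) := Nat.fib_pos.mpr (by omega)
    have h3 : Nat.fib (k + 3) = Nat.fib (k + 1) + Nat.fib (k + 2) := Nat.fib_add_two
    show k + 2 ≤ Nat.fib (k + 3)
    simp only [show k + 1 + 1 = k + 2 from rfl] at h1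
    omega

/-- Theorem (`mnq` even):
`Σ_{k=1}^{∞} L_{nk+mnq} / (Π_{j=0}^{2m} F_{nk+njq})
  = (1/F_{mnq}) Σ_{k=1}^{q} 1/(Π_{j=0}^{2m−1} F_{nk+njq})`. -/
theorem stmt_12 (m n q : ℕ) (hm : 0 < m) (hn : 0 < n) (hq : 0 < q)
    (heven : Even (m * n * q)) :
    Tendsto (fun N => ∑ k ∈ Finset.Icc 1 N,
        (lucas (n * k + m * n * q) : ℝ) /
          ∏ j ∈ Finset.range (2 * m + 1), (Nat.fib (n * k + n * j * q) : ℝ))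
      atTop
      (𝓝 ((1 / (Nat.fib (m * n * q) : ℝ)) *
        ∑ k ∈ Finset.Icc 1 q,
          (1 : ℝ) / ∏ j ∈ Finset.range (2 * m), (Nat.fib (n * k + n * j * q) : ℝ))) := by
  set b : ℕ → ℝ := fun k => 1 / ∏ j ∈ Finset.range (2 * m), (Nat.fib (n * k + n * j * q) : ℝ)
    with hb
  set D : ℝ := (Nat.fib (m * n * q) : ℝ) with hDdef
  have hD0 : (0:ℝ) < D := by
    rw [hDdef]; exact_mod_cast Nat.fib_pos.mpr (by positivity)
  set T : ℝ := (1 / D) * ∑ k ∈ Finset.Icc 1 q, b k with hT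
  set R : ℕ → ℝ := fun N => ∑ k ∈ Finset.Ioc N (N + q), b k with hR
  -- nonnegativity and bound for b
  have hbnonneg : ∀ k, 0 ≤ b k := fun k => by
    rw [hb]
    positivity
  have hble : ∀ N k : ℕ, 1 ≤ N → N < k → b k ≤ 1 / (N : ℝ) := by
    intro N k hN hNk
    have hfk : (N : ℝ) ≤ (Nat.fib (n * k + n * 0 * q) : ℝ) := by
      have : N ≤ Nat.fib (n * k + n * 0 * q) := by
        calc N ≤ Nat.fib (N + 1) := le_fib_succ N
          _ ≤ Nat.fib (n * k + n * 0 * q) := Nat.fib_mono (by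
              calc N + 1 ≤ k := hNk
                _ = 1 * k := (one_mul k).symm
                _ ≤ n * k := Nat.mul_le_mul_right k hn
                _ ≤ n * k + n * 0 * q := Nat.le_add_right _ _)
      exact_mod_cast this
    have hprodge : (N : ℝ) ≤ ∏ j ∈ Finset.range (2 * m), (Nat.fib (n * k + n * j * q) : ℝ) := by
      have hQnat : Nat.fib (n * k + n * 0 * q) ≤ ∏ j ∈ Finset.range (2 * m), Nat.fib (n * k + n * j * q) := by
        refine Finset.single_le_prod' (f := fun j => Nat.fib (n * k + n * j * q))
          (fun j _ => ?_) (a := 0) (Finset.mem_range.mpr (by omega))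
        refine Nat.fib_pos.mpr ?_
        have : 1 ≤ n * k := Nat.one_le_iff_ne_zero.mpr (Nat.mul_ne_zero (by omega) (by omega))
        omega
      have : (Nat.fib (n * k + n * 0 * q) : ℝ) ≤ ∏ j ∈ Finset.range (2 * m), (Nat.fib (n * k + n * j * q) : ℝ) := by
        exact_mod_cast hQnat
      exact le_trans hfk this
    rw [hb]
    exact one_div_le_one_div_of_le (by exact_mod_cast Nat.lt_of_lt_of_le Nat.zero_lt_one hN) hprodge
  -- partial sums
  have hsum : ∀ N, q ≤ N → (∑ k ∈ Finset.Icc 1 N,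
      (lucas (n * k + m * n * q) : ℝ) /
        ∏ j ∈ Finset.range (2 * m + 1), (Nat.fib (n * k + n * j * q) : ℝ))
      = T - (1 / D) * R N := by
    intro N hqN
    have step1 : (∑ k ∈ Finset.Icc 1 N,
        (lucas (n * k + m * n * q) : ℝ) /
          ∏ j ∈ Finset.range (2 * m + 1), (Nat.fib (n * k + n * j * q) : ℝ))
        = (1 / D) * ((∑ k ∈ Finset.Icc 1 N, b k) - ∑ k ∈ Finset.Icc 1 N, b (k + q)) := by
      rw [← Finset.sum_sub_distrib, Finset.mul_sum]
      refine Finset.sum_congr rfl fun k hk => ?_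
      have hk1 : 1 ≤ k := (Finset.mem_Icc.mp hk).1
      exact term_eq m n q k hm hn hq hk1 heven
    have hshift : (∑ k ∈ Finset.Icc 1 N, b (k + q)) = ∑ k ∈ Finset.Ioc q (N + q), b k := by
      rw [show ∀ b : ℕ, Finset.Icc 1 b = Finset.Ioc 0 b from fun b => Finset.Icc_add_one_left_eq_Ioc (a := 0) (b := b)]
      have hmap := Finset.sum_map (Finset.Ioc 0 N) (addRightEmbedding q) b
      rw [Finset.map_add_right_Ioc] at hmap
      simpa [addRightEmbedding] using hmap.symm
    have split1 : (∑ k ∈ Finset.Ioc 0 q, b k) + ∑ k ∈ Finset.Ioc q N, b k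
        = ∑ k ∈ Finset.Ioc 0 N, b k := Finset.sum_Ioc_consecutive _ (Nat.zero_le q) hqN
    have split2 : (∑ k ∈ Finset.Ioc q N, b k) + ∑ k ∈ Finset.Ioc N (N + q), b k
        = ∑ k ∈ Finset.Ioc q (N + q), b k :=
      Finset.sum_Ioc_consecutive _ hqN (Nat.le_add_right N q)
    rw [step1, hshift, show ∀ b : ℕ, Finset.Icc 1 b = Finset.Ioc 0 b from fun b => Finset.Icc_add_one_left_eq_Ioc (a := 0) (b := b)]
    rw [hT, hR, show ∀ b : ℕ, Finset.Icc 1 b = Finset.Ioc 0 b from fun b => Finset.Icc_add_one_left_eq_Ioc (a := 0) (b := b)]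
    rw [← split1, ← split2]
    ring
  -- tail tends to zero
  have hRtend : Tendsto R atTop (𝓝 0) := by
    apply squeeze_zero' (Filter.Eventually.of_forall fun N => Finset.sum_nonneg fun k _ => hbnonneg k)
      (f := R) (g := fun N => (q : ℝ) * (1 / N))
    · filter_upwards [Filter.eventually_ge_atTop 1] with N hN
      rw [hR]
      calc (∑ k ∈ Finset.Ioc N (N + q), b k)
          ≤ ∑ k ∈ Finset.Ioc N (N + q), 1 / (N : ℝ) := by
            refine Finset.sum_le_sum fun k hk => hble N k hN (Finset.mem_Ioc.mp hk).1
        _ = (q : ℝ) * (1 / N) := by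
            rw [Finset.sum_const, Nat.card_Ioc]
            simp
    · simpa using (tendsto_one_div_atTop_nhds_zero_nat).const_mul (q : ℝ)
  have hmain : Tendsto (fun N => T - (1 / D) * R N) atTop (𝓝 T) := by
    have h := (tendsto_const_nhds : Tendsto (fun _ : ℕ => T) atTop (𝓝 T)).sub
      (hRtend.const_mul (1 / D))
    simpa using h
  refine hmain.congr' ?_
  filter_upwards [Filter.eventually_ge_atTop q] with N hN
  exact (hsum N hN).symm
end

section
/- Let m, n, q be positive integers such that q is even or mnq is odd. Then the series Σ_{k=1}^{∞} (−1)^{k−1} · L_{nk+mnq} / ( Π_{j=0}^{2m} F_{nk+njq} ) converges, and its sum equals (1 / F_{mnq}) · Σ_{k=1}^{q} (−1)^{k−1} / ( Π_{j=0}^{2m−1} F_{nk+njq} ). -/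
open Filter Topology Real goldenRatio

lemma lucas_binet : ∀ n : ℕ, (lucas n : ℝ) = φ ^ n + ψ ^ n := by
  intro n
  induction n using Nat.twoStepInduction with
  | zero => norm_num [lucas]
  | one => norm_num [lucas]
  | more n ih2 ih1 =>
    show ((lucas (n + 1) + lucas n : ℕ) : ℝ) = _
    push_cast [ih1, ih2]
    have h1 : φ ^ (n + 2) = φ ^ n * φ ^ 2 := by ring
    have h2 : ψ ^ (n + 2) = ψ ^ n * ψ ^ 2 := by ring
    rw [h1, h2, goldenRatio_sq, goldenConj_sq]
    ring

lemma fib_lucas_key (a b : ℕ) :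
    (Nat.fib b : ℝ) * lucas (a + b) = (Nat.fib (a + 2 * b) : ℝ) - (-1) ^ b * Nat.fib a := by
  have hneg : ((-1 : ℝ)) ^ b = (φ * ψ) ^ b := by rw [goldenRatio_mul_goldenConj]
  have main : ∀ u v : ℝ, (u ^ b - v ^ b) / Real.sqrt 5 * (u ^ (a + b) + v ^ (a + b))
      = (u ^ (a + 2 * b) - v ^ (a + 2 * b)) / Real.sqrt 5
        - (u * v) ^ b * ((u ^ a - v ^ a) / Real.sqrt 5) := by
    intro u v
    have h5 : Real.sqrt 5 ≠ 0 := by positivity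
    field_simp
    ring
  rw [Real.coe_fib_eq, Real.coe_fib_eq, Real.coe_fib_eq, lucas_binet, hneg]
  exact main φ ψ

/-- auxiliary product -/
noncomputable def Pp (n q m k : ℕ) : ℝ :=
  ∏ j ∈ Finset.range (2 * m), (Nat.fib (n * k + n * j * q) : ℝ)

/-- auxiliary signed term -/
noncomputable def bb (n q m k : ℕ) : ℝ := (-1 : ℝ) ^ (k - 1) * (Pp n q m k)⁻¹

/-- Theorem (`q` even or `mnq` odd):
`Σ_{k=1}^{∞} (−1)^{k−1} L_{nk+mnq} / (Π_{j=0}^{2m} F_{nk+njq})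
  = (1/F_{mnq}) Σ_{k=1}^{q} (−1)^{k−1}/(Π_{j=0}^{2m−1} F_{nk+njq})`. -/
theorem stmt_13 (m n q : ℕ) (hm : 0 < m) (hn : 0 < n) (hq : 0 < q)
    (h : Even q ∨ Odd (m * n * q)) :
    Tendsto (fun N => ∑ k ∈ Finset.Icc 1 N,
        (-1 : ℝ) ^ (k - 1) * (lucas (n * k + m * n * q) : ℝ) /
          ∏ j ∈ Finset.range (2 * m + 1), (Nat.fib (n * k + n * j * q) : ℝ))
      atTop
      (𝓝 ((1 / (Nat.fib (m * n * q) : ℝ)) *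
        ∑ k ∈ Finset.Icc 1 q,
          (-1 : ℝ) ^ (k - 1) / ∏ j ∈ Finset.range (2 * m), (Nat.fib (n * k + n * j * q) : ℝ))) := by
  classical
  have hmnq : 0 < m * n * q := by positivity
  have hF : (0 : ℝ) < (Nat.fib (m * n * q) : ℝ) := by
    exact_mod_cast Nat.fib_pos.mpr hmnq
  have hPpos : ∀ k, 1 ≤ k → 0 < Pp n q m k := by
    intro k hk
    apply Finset.prod_pos
    intro j _
    have h1 : 0 < n * k := Nat.mul_pos hn hk
    exact_mod_cast Nat.fib_pos.mpr (by omega)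
  have hsign : ((-1 : ℝ)) ^ (m * n * q) = (-1) ^ q := by
    rcases h with he | ho
    · rw [(he.mul_left _).neg_one_pow, he.neg_one_pow]
    · have hq' : Odd q := (Nat.odd_mul.mp ho).2
      rw [ho.neg_one_pow, hq'.neg_one_pow]
  -- termwise identity
  have hterm : ∀ k, 1 ≤ k →
      (-1 : ℝ) ^ (k - 1) * (lucas (n * k + m * n * q) : ℝ) /
          ∏ j ∈ Finset.range (2 * m + 1), (Nat.fib (n * k + n * j * q) : ℝ)
        = (1 / (Nat.fib (m * n * q) : ℝ)) * (bb n q m k - bb n q m (k + q)) := by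
    intro k hk
    have hnk : 0 < n * k := Nat.mul_pos hn hk
    have hDpos : 0 < ∏ j ∈ Finset.range (2 * m + 1), (Nat.fib (n * k + n * j * q) : ℝ) := by
      apply Finset.prod_pos
      intro j _
      exact_mod_cast Nat.fib_pos.mpr (by omega)
    have hPk := hPpos k hk
    have hPkq := hPpos (k + q) (by omega)
    have hfib2 : (0 : ℝ) < (Nat.fib (n * k + 2 * (m * n * q)) : ℝ) := by
      exact_mod_cast Nat.fib_pos.mpr (by omega)
    have hfib1 : (0 : ℝ) < (Nat.fib (n * k) : ℝ) := by
      exact_mod_cast Nat.fib_pos.mpr (by omega)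
    have e1 : ∏ j ∈ Finset.range (2 * m + 1), (Nat.fib (n * k + n * j * q) : ℝ)
        = Pp n q m k * (Nat.fib (n * k + 2 * (m * n * q)) : ℝ) := by
      rw [Finset.prod_range_succ, Pp]
      congr 3
      ring
    have e2 : ∏ j ∈ Finset.range (2 * m + 1), (Nat.fib (n * k + n * j * q) : ℝ)
        = (Nat.fib (n * k) : ℝ) * Pp n q m (k + q) := by
      rw [Finset.prod_range_succ']
      have h0 : (Nat.fib (n * k + n * 0 * q) : ℝ) = (Nat.fib (n * k) : ℝ) := by norm_num
      rw [h0, mul_comm]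
      unfold Pp
      congr 1
      apply Finset.prod_congr rfl
      intro j _
      congr 2
      ring
    have hkey : (Nat.fib (n * k + 2 * (m * n * q)) : ℝ) - (-1) ^ q * (Nat.fib (n * k) : ℝ)
        = (Nat.fib (m * n * q) : ℝ) * lucas (n * k + m * n * q) := by
      rw [← hsign]
      linarith [fib_lucas_key (n * k) (m * n * q)]
    have hq1 : (-1 : ℝ) ^ (k + q - 1) = (-1) ^ (k - 1) * (-1) ^ q := by
      rw [← pow_add]
      congr 1
      omega
    have i1 : (Pp n q m k)⁻¹ = (Nat.fib (n * k + 2 * (m * n * q)) : ℝ) /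
        ∏ j ∈ Finset.range (2 * m + 1), (Nat.fib (n * k + n * j * q) : ℝ) := by
      rw [e1]
      field_simp
    have i2 : (Pp n q m (k + q))⁻¹ = (Nat.fib (n * k) : ℝ) /
        ∏ j ∈ Finset.range (2 * m + 1), (Nat.fib (n * k + n * j * q) : ℝ) := by
      rw [e2]
      field_simp
    rw [bb, bb, hq1, i1, i2]
    rw [show ((-1 : ℝ)) ^ (k - 1) * ((Nat.fib (n * k + 2 * (m * n * q)) : ℝ) /
          ∏ j ∈ Finset.range (2 * m + 1), (Nat.fib (n * k + n * j * q) : ℝ))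
        - (-1) ^ (k - 1) * (-1) ^ q * ((Nat.fib (n * k) : ℝ) /
          ∏ j ∈ Finset.range (2 * m + 1), (Nat.fib (n * k + n * j * q) : ℝ))
        = (-1) ^ (k - 1) * (((Nat.fib (n * k + 2 * (m * n * q)) : ℝ)
            - (-1) ^ q * (Nat.fib (n * k) : ℝ)) /
          ∏ j ∈ Finset.range (2 * m + 1), (Nat.fib (n * k + n * j * q) : ℝ)) from by ring,
      hkey]
    field_simp
  -- sums
  have hsum : ∀ N, (∑ k ∈ Finset.Icc 1 N,
        (-1 : ℝ) ^ (k - 1) * (lucas (n * k + m * n * q) : ℝ) /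
          ∏ j ∈ Finset.range (2 * m + 1), (Nat.fib (n * k + n * j * q) : ℝ))
      = (1 / (Nat.fib (m * n * q) : ℝ)) *
          ((∑ k ∈ Finset.Icc 1 q, bb n q m k) - ∑ k ∈ Finset.Ioc N (N + q), bb n q m k) := by
    intro N
    rw [Finset.sum_congr rfl (fun k hk => hterm k (Finset.mem_Icc.mp hk).1), ← Finset.mul_sum,
      Finset.sum_sub_distrib]
    congr 1
    have hshift : (∑ k ∈ Finset.Icc 1 N, bb n q m (k + q))
        = ∑ k ∈ Finset.Icc (1 + q) (N + q), bb n q m k := by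
      rw [← Finset.map_add_right_Icc 1 N q, Finset.sum_map]
      rfl
    have hIcc : ∀ x : ℕ, Finset.Icc 1 x = Finset.Ioc 0 x := fun x => Finset.Icc_add_one_left_eq_Ioc 0 x
    have hIcc2 : Finset.Icc (1 + q) (N + q) = Finset.Ioc q (N + q) := by
      rw [add_comm 1 q]
      exact Finset.Icc_add_one_left_eq_Ioc q (N + q)
    have c1 := Finset.sum_Ioc_consecutive (bb n q m) (Nat.zero_le N) (Nat.le_add_right N q)
    have c2 := Finset.sum_Ioc_consecutive (bb n q m) (Nat.zero_le q) (Nat.le_add_right q N)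
    rw [hshift, hIcc, hIcc, hIcc2]
    rw [add_comm q N] at c2
    linarith
  -- tail tends to zero
  have htail : Tendsto (fun N => ∑ k ∈ Finset.Ioc N (N + q), bb n q m k) atTop (𝓝 0) := by
    apply squeeze_zero_norm' (a := fun N : ℕ => (q : ℝ) * (N : ℝ)⁻¹)
    · filter_upwards [eventually_ge_atTop 1] with N hN
      have hb : ∀ k ∈ Finset.Ioc N (N + q), ‖bb n q m k‖ ≤ (N : ℝ)⁻¹ := by
        intro k hk
        obtain ⟨hk1, hk2⟩ := Finset.mem_Ioc.mp hk
        have hk1' : 1 ≤ k := by omega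
        have hPk := hPpos k hk1'
        have hnorm : ‖bb n q m k‖ = (Pp n q m k)⁻¹ := by
          rw [bb, norm_mul, norm_pow, norm_neg, norm_one, one_pow, one_mul,
            norm_inv, Real.norm_eq_abs, abs_of_pos hPk]
        rw [hnorm]
        have hNle : (N : ℝ) ≤ Pp n q m k := by
          have h1 : Nat.fib (n * k) ≤ ∏ j ∈ Finset.range (2 * m), Nat.fib (n * k + n * j * q) := by
            have h0 : Nat.fib (n * k + n * 0 * q)
                ≤ ∏ j ∈ Finset.range (2 * m), Nat.fib (n * k + n * j * q) :=
              Finset.single_le_prod' (f := fun j => Nat.fib (n * k + n * j * q))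
                (fun j _ => by
                  have hpos : 0 < n * k + n * j * q := by
                    have := Nat.mul_pos hn hk1'; omega
                  exact Nat.fib_pos.mpr hpos)
                (Finset.mem_range.mpr (by omega))
            simpa using h0
          have h3 : Pp n q m k
              = ((∏ j ∈ Finset.range (2 * m), Nat.fib (n * k + n * j * q) : ℕ) : ℝ) := by
            unfold Pp; push_cast; rfl
          have h2 : N ≤ Nat.fib (n * k) := by
            have hk3 : N + 1 ≤ n * k := by
              have : k ≤ n * k := Nat.le_mul_of_pos_left k hn
              omega
            have := Nat.fib_mono hk3
            have := Nat.le_fib_add_one (N + 1)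
            omega
          rw [h3]
          exact_mod_cast le_trans h2 h1
        have hNpos : (0 : ℝ) < N := by exact_mod_cast hN
        exact inv_anti₀ hNpos hNle
      calc ‖∑ k ∈ Finset.Ioc N (N + q), bb n q m k‖
          ≤ ∑ k ∈ Finset.Ioc N (N + q), ‖bb n q m k‖ := norm_sum_le _ _
        _ ≤ ∑ _k ∈ Finset.Ioc N (N + q), (N : ℝ)⁻¹ := Finset.sum_le_sum hb
        _ = q * (N : ℝ)⁻¹ := by
            rw [Finset.sum_const, Nat.card_Ioc]
            simp
    · have := tendsto_one_div_atTop_nhds_zero_nat.const_mul (q : ℝ)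
      simpa [one_div, mul_comm] using this
  -- conclude
  have hlim : Tendsto (fun N => (1 / (Nat.fib (m * n * q) : ℝ)) *
      ((∑ k ∈ Finset.Icc 1 q, bb n q m k) - ∑ k ∈ Finset.Ioc N (N + q), bb n q m k)) atTop
      (𝓝 ((1 / (Nat.fib (m * n * q) : ℝ)) * ((∑ k ∈ Finset.Icc 1 q, bb n q m k) - 0))) :=
    tendsto_const_nhds.mul (tendsto_const_nhds.sub htail)
  have hT : (∑ k ∈ Finset.Icc 1 q,
      (-1 : ℝ) ^ (k - 1) / ∏ j ∈ Finset.range (2 * m), (Nat.fib (n * k + n * j * q) : ℝ))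
      = ∑ k ∈ Finset.Icc 1 q, bb n q m k := by
    apply Finset.sum_congr rfl
    intro k _
    simp only [bb, Pp, div_eq_mul_inv]
  rw [funext hsum, hT]
  simpa using hlim
end
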